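/- Let F^λ[G] be a twisted group algebra of characteristic p > 0 whose commutator ideal F^λ[G]^[2] is nil. If a, b ∈ G are untwisted p-elements (i.e. there exist γ₁, γ₂ ∈ F such that γ₁ã and γ₂b̃ have the same orders as a and b respectively), then ab is a p-element whose order p^l equals the order of γ₁γ₂ã b̃, and μ(ab) = (γ₁γ₂λ(a,b))^{−p^l}. -/

import Mathlib

/-- Additive subgroup generated by products `s * t` with `s ∈ S`, `t ∈ T`. -/
def aprod {R : Type*} [NonUnitalRing R] (S T : AddSubgroup R) : AddSubgroup R :=
  AddSubgroup.closure {x : R | ∃ s ∈ S, ∃ t ∈ T, x = s * t}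

/-- Additive subgroup generated by Lie commutators `s*t - t*s`. -/
def lbrk {R : Type*} [NonUnitalRing R] (S T : AddSubgroup R) : AddSubgroup R :=
  AddSubgroup.closure {x : R | ∃ s ∈ S, ∃ t ∈ T, x = s * t - t * s}

/-- The lower Lie central series `γ₁(R) = R`, `γₙ(R) = [γₙ₋₁(R), R]`. -/
def lieGamma (R : Type*) [NonUnitalRing R] : ℕ → AddSubgroup R
  | 0 => ⊤
  | 1 => ⊤
  | n + 2 => lbrk (lieGamma R (n + 1)) ⊤

/-- The `n`-th lower Lie power `R^[n] = γₙ(R)·R`. -/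
def lowerLiePow (R : Type*) [NonUnitalRing R] (n : ℕ) : AddSubgroup R :=
  aprod (lieGamma R n) ⊤

lemma comm_mem_llp {A : Type*} [Ring A] (x y : A) : x * y - y * x ∈ lowerLiePow A 2 := by
  have h1 : x * y - y * x ∈ lieGamma A 2 := by
    apply AddSubgroup.subset_closure
    exact ⟨x, trivial, y, trivial, rfl⟩
  apply AddSubgroup.subset_closure
  exact ⟨x * y - y * x, h1, 1, trivial, (mul_one _).symm⟩

lemma llp_mul_right {A : Type*} [Ring A] {n : A} (hn : n ∈ lowerLiePow A 2) (r : A) :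
    n * r ∈ lowerLiePow A 2 := by
  induction hn using AddSubgroup.closure_induction with
  | mem x hx =>
      obtain ⟨s, hs, t, -, rfl⟩ := hx
      exact AddSubgroup.subset_closure ⟨s, hs, t * r, trivial, mul_assoc s t r⟩
  | zero => simp only [zero_mul]; exact AddSubgroup.zero_mem _
  | add x y _ _ hx hy => simpa [add_mul] using AddSubgroup.add_mem _ hx hy
  | neg x _ hx => simpa [neg_mul] using AddSubgroup.neg_mem _ hx

lemma llp_mul_left {A : Type*} [Ring A] {n : A} (hn : n ∈ lowerLiePow A 2) (r : A) :
    r * n ∈ lowerLiePow A 2 := by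
  have h := AddSubgroup.sub_mem _ (llp_mul_right hn r) (comm_mem_llp n r)
  simpa using h

/-- The congruence modulo `lowerLiePow A 2`. -/
def llpCon (A : Type*) [Ring A] : RingCon A where
  r x y := x - y ∈ lowerLiePow A 2
  iseqv := ⟨fun x => by rw [sub_self]; exact AddSubgroup.zero_mem _, fun h => by simpa using AddSubgroup.neg_mem _ h,
    fun h1 h2 => by simpa using AddSubgroup.add_mem _ h1 h2⟩
  mul' := by
    intro w x y z h1 h2
    show w * y - x * z ∈ lowerLiePow A 2
    have e : w * y - x * z = (w - x) * y + x * (y - z) := by noncomm_ring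
    rw [e]
    exact AddSubgroup.add_mem _ (llp_mul_right h1 y) (llp_mul_left h2 x)
  add' := by
    intro w x y z h1 h2
    show w + y - (x + z) ∈ lowerLiePow A 2
    have e : w + y - (x + z) = (w - x) + (y - z) := by noncomm_ring
    rw [e]
    exact AddSubgroup.add_mem _ h1 h2

section
variable {F : Type*} [Field F] {G : Type*} [Group G]
    {A : Type*} [Ring A] [Algebra F A]

lemma basis_pow (l : G → G → Fˣ) (B : Module.Basis G F A)
    (hone : B 1 = 1)
    (hmul : ∀ g h : G, B g * B h = ((l g h : F)) • B (g * h))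
    (hnorm : ∀ g : G, l g 1 = 1 ∧ l 1 g = 1) (g : G) :
    ∀ m : ℕ, (B g) ^ m = (∏ i ∈ Finset.Ico 1 m, (l (g ^ i) g : F)) • B (g ^ m)
  | 0 => by simp [hone]
  | (m+1) => by
    rcases Nat.eq_zero_or_pos m with rfl | hm
    · simp [(hnorm g).2]
    · rw [pow_succ, basis_pow l B hone hmul hnorm g m, smul_mul_assoc, hmul,
        Finset.prod_Ico_succ_top hm, smul_smul, ← pow_succ]

lemma basis_smul_eq (B : Module.Basis G F A) {α δ : F} {g h : G}
    (heq : α • B g = δ • B h) (hα : α ≠ 0) : g = h ∧ α = δ := by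
  have := congrArg B.repr heq
  rw [map_smul, map_smul, B.repr_self, B.repr_self, Finsupp.smul_single,
    Finsupp.smul_single, smul_eq_mul, smul_eq_mul, mul_one, mul_one] at this
  rcases (Finsupp.single_eq_single_iff _ _ _ _).1 this with ⟨h1, h2⟩ | ⟨h1, -⟩
  · exact ⟨h1, h2⟩
  · exact absurd h1 hα
end


/-- The twist `μ(g) = ∏_{i=1}^{k-1} λ(gⁱ,g)` where `k` is the order of `g`. -/
noncomputable def twist {G : Type*} [Group G] {F : Type*} [Field F] (l : G → G → Fˣ) (g : G) : F :=
  ∏ i ∈ Finset.Icc 1 (orderOf g - 1), (l (g ^ i) g : F)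

/-- In a twisted group algebra of characteristic `p` with nil commutator ideal,
if `a, b` are untwisted `p`-elements (via scalars `γ₁, γ₂`), then `ab` is a
`p`-element whose order `pˡ` equals the order of `γ₁γ₂ã b̃`, and
`μ(ab) = (γ₁γ₂λ(a,b))^{-pˡ}`. -/
theorem stmt_9 {F : Type*} [Field F] {G : Type*} [Group G]
    {A : Type*} [Ring A] [Algebra F A]
    (l : G → G → Fˣ) (B : Module.Basis G F A)
    (hone : B 1 = 1)
    (hmul : ∀ g h : G, B g * B h = ((l g h : F)) • B (g * h))
    (hcoc : ∀ a b c : G, l a (b * c) * l b c = l (a * b) c * l a b)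
    (hnorm : ∀ g : G, l g 1 = 1 ∧ l 1 g = 1)
    (p : ℕ) [Fact p.Prime] [CharP F p]
    (hnil : ∀ x ∈ lowerLiePow A 2, IsNilpotent x)
    (a b : G) (γ₁ γ₂ : F)
    (ha : ∃ s : ℕ, orderOf a = p ^ s) (hb : ∃ s : ℕ, orderOf b = p ^ s)
    (ha' : orderOf (γ₁ • B a) = orderOf a)
    (hb' : orderOf (γ₂ • B b) = orderOf b) :
    ∃ k : ℕ, orderOf (a * b) = p ^ k ∧
      orderOf ((γ₁ * γ₂) • (B a * B b)) = p ^ k ∧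
      twist l (a * b) = ((γ₁ * γ₂ * (l a b : F))⁻¹) ^ (p ^ k) := by
  classical
  obtain ⟨s₁, ha1⟩ := ha
  obtain ⟨s₂, hb1⟩ := hb
  have hp : p.Prime := Fact.out
  have h10 : (1 : A) ≠ 0 := hone ▸ B.ne_zero 1
  have : Nontrivial A := nontrivial_of_ne 1 0 h10
  have : CharP A p := charP_of_injective_algebraMap (algebraMap F A).injective p
  set u := γ₁ • B a with hu_def
  set v := γ₂ • B b with hv_def
  have hu : u ^ p ^ s₁ = 1 := by rw [← ha1, ← ha']; exact pow_orderOf_eq_one u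
  have hv : v ^ p ^ s₂ = 1 := by rw [← hb1, ← hb']; exact pow_orderOf_eq_one v
  set M := max s₁ s₂ with hM
  have huM : u ^ p ^ M = 1 := by
    obtain ⟨d, hd⟩ := pow_dvd_pow p (le_max_left s₁ s₂)
    rw [hd, pow_mul, hu, one_pow]
  have hvM : v ^ p ^ M = 1 := by
    obtain ⟨d, hd⟩ := pow_dvd_pow p (le_max_right s₁ s₂)
    rw [hd, pow_mul, hv, one_pow]
  set Q := llpCon A with hQ
  have hcomm : Commute (Q.mk' u) (Q.mk' v) := by
    show Q.mk' u * Q.mk' v = Q.mk' v * Q.mk' u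
    rw [← map_mul, ← map_mul]
    exact Q.eq.mpr (comm_mem_llp u v)
  have hQ1 : Q.mk' ((u * v) ^ p ^ M) = Q.mk' 1 := by
    rw [map_pow, map_mul, hcomm.mul_pow, ← map_pow, ← map_pow, huM, hvM, map_one, mul_one]
  have hn : (u * v) ^ p ^ M - 1 ∈ lowerLiePow A 2 := Q.eq.1 hQ1
  obtain ⟨m, hm⟩ := hnil _ hn
  have hmt : ((u * v) ^ p ^ M - 1) ^ p ^ m = 0 := by
    have hle : m ≤ p ^ m := le_of_lt (Nat.lt_pow_self (n := m) hp.one_lt)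
    calc ((u * v) ^ p ^ M - 1) ^ p ^ m
        = ((u * v) ^ p ^ M - 1) ^ m * ((u * v) ^ p ^ M - 1) ^ (p ^ m - m) := by
          rw [← pow_add, Nat.add_sub_cancel' hle]
      _ = 0 := by rw [hm, zero_mul]
  have hbig : (u * v) ^ p ^ (M + m) = 1 := by
    have h1 : (u * v) ^ p ^ M = 1 + ((u * v) ^ p ^ M - 1) := by abel
    rw [pow_add, pow_mul, h1,
      add_pow_char_pow_of_commute p m (Commute.one_left _), one_pow, hmt, add_zero]
  -- uv is the element in the statement
  have huv : u * v = (γ₁ * γ₂) • (B a * B b) := by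
    rw [hu_def, hv_def, smul_mul_smul_comm]
  obtain ⟨k, hk, hordk⟩ := (Nat.dvd_prime_pow hp).1 (orderOf_dvd_of_pow_eq_one hbig)
  -- rewrite uv as a scalar multiple of B (a*b)
  set β : F := γ₁ * γ₂ * (l a b : F) with hβ
  have huvβ : u * v = β • B (a * b) := by
    rw [huv, hmul, smul_smul, hβ]
  -- γ's are nonzero
  have hγ₁ : γ₁ ≠ 0 := by
    intro h0
    have h0u : u = 0 := by rw [hu_def, h0, zero_smul]
    rw [h0u, zero_pow (pow_pos hp.pos s₁).ne'] at hu
    exact h10 hu.symm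
  have hγ₂ : γ₂ ≠ 0 := by
    intro h0
    have h0v : v = 0 := by rw [hv_def, h0, zero_smul]
    rw [h0v, zero_pow (pow_pos hp.pos s₂).ne'] at hv
    exact h10 hv.symm
  have hβ0 : β ≠ 0 := by
    rw [hβ]
    exact mul_ne_zero (mul_ne_zero hγ₁ hγ₂) (Units.ne_zero _)
  have hprod0 : ∀ s : Finset ℕ, (∏ i ∈ s, (l ((a*b) ^ i) (a*b) : F)) ≠ 0 := by
    intro s
    exact Finset.prod_ne_zero_iff.2 fun i _ => Units.ne_zero _
  -- power formula for u*v
  have hpowf : ∀ n : ℕ, (u * v) ^ n =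
      (β ^ n * ∏ i ∈ Finset.Ico 1 n, (l ((a*b) ^ i) (a*b) : F)) • B ((a*b) ^ n) := by
    intro n
    rw [huvβ, smul_pow, basis_pow l B hone hmul hnorm (a*b) n, smul_smul]
  -- (a*b)^(p^k) = 1
  have hab1 : (a * b) ^ p ^ k = 1 := by
    have h1 : (u * v) ^ p ^ k = 1 := by rw [← hordk]; exact pow_orderOf_eq_one _
    rw [hpowf] at h1
    have h2 : (β ^ p ^ k * ∏ i ∈ Finset.Ico 1 (p ^ k), (l ((a*b) ^ i) (a*b) : F)) • B ((a*b) ^ p ^ k)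
        = (1 : F) • B 1 := by rw [h1, one_smul, hone]
    exact (basis_smul_eq B h2 (mul_ne_zero (pow_ne_zero _ hβ0) (hprod0 _))).1
  obtain ⟨j, hj, hordj⟩ := (Nat.dvd_prime_pow hp).1 (orderOf_dvd_of_pow_eq_one hab1)
  -- twist as a product over Ico
  have hptw : twist l (a * b) = ∏ i ∈ Finset.Ico 1 (p ^ j), (l ((a*b) ^ i) (a*b) : F) := by
    have he : Finset.Icc 1 (p ^ j - 1) = Finset.Ico 1 (p ^ j) := by
      rw [← Finset.Ico_add_one_right_eq_Icc]
      congr 1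
      have := pow_pos hp.pos j
      omega
    unfold twist
    rw [hordj, he]
  set α : F := β ^ p ^ j * twist l (a * b) with hα
  have hwj : (u * v) ^ p ^ j = α • (1 : A) := by
    rw [hpowf, hα, hptw, ← hordj, pow_orderOf_eq_one, hone]
  have hαpow : α ^ p ^ (k - j) = 1 := by
    have h1 : ((u * v) ^ p ^ j) ^ p ^ (k - j) = 1 := by
      rw [← pow_mul, ← pow_add, Nat.add_sub_cancel' hj, ← hordk]
      exact pow_orderOf_eq_one _
    rw [hwj, smul_pow, one_pow] at h1
    have h2 : (α ^ p ^ (k - j)) • B (1 : G) = (1 : F) • B (1 : G) := by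
      rw [hone, one_smul, h1]
    exact (basis_smul_eq B h2 (pow_ne_zero _ (mul_ne_zero (pow_ne_zero _ hβ0)
      (hptw ▸ hprod0 _)))).2
  have hα1 : α = 1 := by
    have h1 : (α - 1) ^ p ^ (k - j) = 0 := by
      rw [sub_pow_char_pow, hαpow, one_pow, sub_self]
    have h2 : α - 1 = 0 := by
      by_contra h3
      exact (pow_ne_zero _ h3) h1
    exact sub_eq_zero.mp h2
  -- order of u*v divides p^j
  have hduv : p ^ k ∣ p ^ j := by
    rw [← hordk]
    apply orderOf_dvd_of_pow_eq_one
    rw [hwj, hα1, one_smul]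
  have hkj : p ^ k = p ^ j :=
    Nat.dvd_antisymm hduv (pow_dvd_pow p hj)
  refine ⟨j, hordj, ?_, ?_⟩
  · rw [← huv, hordk, hkj]
  · have h1 : β ^ p ^ j * twist l (a * b) = 1 := by rw [← hα, hα1]
    have h2 : twist l (a * b) = (β ^ p ^ j)⁻¹ := by
      have hb0 : β ^ p ^ j ≠ 0 := pow_ne_zero _ hβ0
      field_simp
      linear_combination h1
    rw [h2, ← inv_pow]
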